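/- Under the Hard-Concrete relaxation with u ~ Uniform(0,1), the probability that z̃ > 0 (the gate is not fully closed) equals σ(log α − β·log(−γ/ζ)). -/

import Mathlib

open MeasureTheory

/-- Under the Hard-Concrete relaxation with `u ~ Uniform(0,1)`, the probability
that the gate is not fully closed, `P[z̃ > 0]`, equals `σ(log α − β·log(−γ/ζ))`. -/
theorem stmt8 (α β γ ζ : ℝ) (hα : 0 < α) (hβ : 0 < β) (hγ : γ < 0) (hζ : 1 < ζ)
    (sig : ℝ → ℝ) (hsig : ∀ x, sig x = (1 + Real.exp (-x))⁻¹)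
    (ztilde : ℝ → ℝ)
    (hz : ∀ u, ztilde u =
      max 0 (min 1 (sig ((Real.log α + Real.log u - Real.log (1 - u)) / β) * (ζ - γ) + γ))) :
    volume {u : ℝ | u ∈ Set.Ioo (0:ℝ) 1 ∧ 0 < ztilde u} =
      ENNReal.ofReal (sig (Real.log α - β * Real.log (-γ / ζ))) := by
  have hζ0 : (0:ℝ) < ζ := lt_trans one_pos hζ
  have hγ0 : (0:ℝ) < -γ := by linarith
  set L : ℝ := Real.log (-γ / ζ) with hLdef
  set t : ℝ := β * L - Real.log α with htdef
  have het : 0 < Real.exp t := Real.exp_pos t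
  have hden : 0 < 1 + Real.exp t := by positivity
  set c : ℝ := Real.exp t / (1 + Real.exp t) with hcdef
  have hc0 : 0 < c := by positivity
  have hc1 : c < 1 := by rw [hcdef, div_lt_one hden]; linarith
  have hLsplit : L = Real.log (-γ) - Real.log ζ := Real.log_div (ne_of_gt hγ0) (ne_of_gt hζ0)
  have key : ∀ u : ℝ, 0 < u → u < 1 → (0 < ztilde u ↔ c < u) := by
    intro u hu0 hu1
    have h1u : 0 < 1 - u := by linarith
    rw [hz]
    set s : ℝ := (Real.log α + Real.log u - Real.log (1 - u)) / β with hsdef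
    have hes : 0 < 1 + Real.exp (-s) := by positivity
    have hmax : (0 < max 0 (min 1 (sig s * (ζ - γ) + γ))) ↔
        0 < sig s * (ζ - γ) + γ := by
      simp [lt_max_iff, lt_min_iff]
    rw [hmax, hsig s]
    have step1 : (0 < (1 + Real.exp (-s))⁻¹ * (ζ - γ) + γ) ↔
        Real.exp (-s) * (-γ) < ζ := by
      rw [show (1 + Real.exp (-s))⁻¹ * (ζ - γ) + γ
          = (ζ + γ * Real.exp (-s)) / (1 + Real.exp (-s)) by field_simp; ring]
      rw [lt_div_iff₀ hes]
      constructor <;> intro h <;> nlinarith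
    rw [step1]
    have step2 : (Real.exp (-s) * (-γ) < ζ) ↔ L < s := by
      rw [show Real.exp (-s) * (-γ) < ζ ↔ Real.exp (-s) < ζ / (-γ) by
        rw [lt_div_iff₀ hγ0]]
      rw [show ζ / (-γ) = Real.exp (Real.log (ζ / (-γ))) from
        (Real.exp_log (by positivity)).symm, Real.exp_lt_exp,
        Real.log_div (ne_of_gt hζ0) (ne_of_gt hγ0), hLsplit]
      constructor <;> intro h <;> linarith
    rw [step2]
    have step3 : (L < s) ↔ t < Real.log u - Real.log (1 - u) := by
      rw [hsdef, lt_div_iff₀ hβ, htdef]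
      constructor <;> intro h <;> linarith [mul_comm β L]
    rw [step3]
    have hlog : Real.log u - Real.log (1 - u) = Real.log (u / (1 - u)) :=
      (Real.log_div (ne_of_gt hu0) (ne_of_gt h1u)).symm
    rw [hlog]
    rw [← Real.exp_lt_exp, Real.exp_log (by positivity : (0:ℝ) < u / (1 - u))]
    rw [lt_div_iff₀ h1u, hcdef, div_lt_iff₀ hden]
    constructor <;> intro h <;> nlinarith
  have hset : {u : ℝ | u ∈ Set.Ioo (0:ℝ) 1 ∧ 0 < ztilde u} = Set.Ioo c 1 := by
    ext u
    simp only [Set.mem_setOf_eq, Set.mem_Ioo]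
    constructor
    · rintro ⟨⟨hu0, hu1⟩, hpos⟩
      exact ⟨(key u hu0 hu1).mp hpos, hu1⟩
    · rintro ⟨hcu, hu1⟩
      have hu0 : 0 < u := lt_trans hc0 hcu
      exact ⟨⟨hu0, hu1⟩, (key u hu0 hu1).mpr hcu⟩
  rw [hset, Real.volume_Ioo]
  congr 1
  rw [hsig]
  have : -(Real.log α - β * L) = t := by rw [htdef]; ring
  rw [this, hcdef]
  field_simp
  ring
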